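/- There exist a measurable space (Ω, F), probability measures Q1, Q2, a level p ∈ (0,1), and comonotonic bounded random variables X, Y such that MES_p^{Q1,Q2}(X+Y) < MES_p^{Q1,Q2}(X) + MES_p^{Q1,Q2}(Y). Hence Max-ES is not comonotonic-additive in general. -/

import Mathlib

open MeasureTheory Set

noncomputable def VaR {Ω : Type*} [MeasurableSpace Ω] (Q : Measure Ω) (X : Ω → ℝ) (p : ℝ) : ℝ :=
  sInf {x : ℝ | p ≤ (Q {ω | X ω ≤ x}).toReal}

noncomputable def ES {Ω : Type*} [MeasurableSpace Ω] (Q : Measure Ω) (X : Ω → ℝ) (p : ℝ) : ℝ :=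
  (1 - p)⁻¹ * ∫ q in p..1, VaR Q X q

def Comonotonic {Ω : Type*} (X Y : Ω → ℝ) : Prop :=
  ∀ ω ω', 0 ≤ (X ω - X ω') * (Y ω - Y ω')

-- helper measure
noncomputable def myQ (a b c : ℝ) : Measure (Fin 3) :=
  (ENNReal.ofReal a) • Measure.dirac 0 + (ENNReal.ofReal b) • Measure.dirac 1
    + (ENNReal.ofReal c) • Measure.dirac 2

open scoped Classical in
lemma myQ_apply (a b c : ℝ) (ha : 0 ≤ a) (hb : 0 ≤ b) (hc : 0 ≤ c) (s : Set (Fin 3)) :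
    ((myQ a b c) s).toReal
      = (if (0 : Fin 3) ∈ s then a else 0) + (if (1 : Fin 3) ∈ s then b else 0)
        + (if (2 : Fin 3) ∈ s then c else 0) := by
  have hs : MeasurableSet s := trivial
  simp only [myQ, Measure.add_apply, Measure.smul_apply, smul_eq_mul,
    Measure.dirac_apply' _ hs, Set.indicator_apply, Pi.one_apply]
  split_ifs <;>
    simp [ENNReal.toReal_add, ENNReal.ofReal_ne_top, ENNReal.add_ne_top, ha, hb, hc]

lemma myQ_prob (a b c : ℝ) (ha : 0 ≤ a) (hb : 0 ≤ b) (hc : 0 ≤ c) (habc : a + b + c = 1) :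
    IsProbabilityMeasure (myQ a b c) := by
  constructor
  simp [myQ, ← ENNReal.ofReal_add, ha, hb, hc, add_nonneg, habc]

lemma VaR1 {Ω : Type*} [MeasurableSpace Ω] (Q : Measure Ω) (X : Ω → ℝ) (c : ℝ)
    (hc0 : 0 < c) (hc1 : c < 1)
    (hF : ∀ x, (Q {ω | X ω ≤ x}).toReal = if x < 0 then 0 else if x < 1 then c else 1) :
    ∀ q, 0 < q → q ≤ 1 → VaR Q X q = if q ≤ c then 0 else 1 := by
  intro q hq0 hq1
  unfold VaR
  by_cases h : q ≤ c
  · have hs : {x : ℝ | q ≤ (Q {ω | X ω ≤ x}).toReal} = Ici 0 := by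
      ext x
      simp only [mem_setOf_eq, mem_Ici, hF x]
      split_ifs with h1 h2 <;> constructor <;> intro hx <;> linarith
    rw [hs, csInf_Ici]; simp [h]
  · have hs : {x : ℝ | q ≤ (Q {ω | X ω ≤ x}).toReal} = Ici 1 := by
      ext x
      simp only [mem_setOf_eq, mem_Ici, hF x]
      split_ifs with h1 h2 <;> constructor <;> intro hx <;> linarith
    rw [hs, csInf_Ici]; simp [h]

lemma VaR2 {Ω : Type*} [MeasurableSpace Ω] (Q : Measure Ω) (X : Ω → ℝ) (c1 c2 : ℝ)
    (hc0 : 0 < c1) (hc12 : c1 ≤ c2) (hc1 : c2 < 1)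
    (hF : ∀ x, (Q {ω | X ω ≤ x}).toReal
      = if x < 0 then 0 else if x < 1 then c1 else if x < 2 then c2 else 1) :
    ∀ q, 0 < q → q ≤ 1 → VaR Q X q = if q ≤ c1 then 0 else if q ≤ c2 then 1 else 2 := by
  intro q hq0 hq1
  unfold VaR
  by_cases h : q ≤ c1
  · have hs : {x : ℝ | q ≤ (Q {ω | X ω ≤ x}).toReal} = Ici 0 := by
      ext x
      simp only [mem_setOf_eq, mem_Ici, hF x]
      split_ifs with h1 h2 h3 <;> constructor <;> intro hx <;> linarith
    rw [hs, csInf_Ici]; simp [h]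
  · by_cases h' : q ≤ c2
    · have hs : {x : ℝ | q ≤ (Q {ω | X ω ≤ x}).toReal} = Ici 1 := by
        ext x
        simp only [mem_setOf_eq, mem_Ici, hF x]
        split_ifs with h1 h2 h3 <;> constructor <;> intro hx <;> linarith
      rw [hs, csInf_Ici]; simp [h, h']
    · have hs : {x : ℝ | q ≤ (Q {ω | X ω ≤ x}).toReal} = Ici 2 := by
        ext x
        simp only [mem_setOf_eq, mem_Ici, hF x]
        split_ifs with h1 h2 h3 <;> constructor <;> intro hx <;> linarith
      rw [hs, csInf_Ici]; simp [h, h']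

lemma indIntegrable (c : ℝ) :
    IntegrableOn ((Ioi c).indicator (fun _ => (1:ℝ))) (Ioc (1/2 : ℝ) 1) := by
  exact (integrableOn_const measure_Ioc_lt_top.ne).indicator measurableSet_Ioi

lemma inter_eq (c : ℝ) (h1 : 1/2 ≤ c) (h2 : c ≤ 1) :
    Ioc (1/2 : ℝ) 1 ∩ Ioi c = Ioc c 1 := by
  ext x
  simp only [mem_inter_iff, mem_Ioc, mem_Ioi]
  constructor
  · rintro ⟨⟨_, hx2⟩, hx3⟩; exact ⟨hx3, hx2⟩
  · rintro ⟨hx1, hx2⟩; exact ⟨⟨by linarith, hx2⟩, hx1⟩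

lemma indInt (c : ℝ) (h1 : 1/2 ≤ c) (h2 : c ≤ 1) :
    ∫ q in Ioc (1/2 : ℝ) 1, (Ioi c).indicator (fun _ => (1:ℝ)) q = 1 - c := by
  rw [setIntegral_indicator measurableSet_Ioi, inter_eq c h1 h2]
  simp [Real.volume_Ioc, ENNReal.toReal_ofReal, sub_nonneg.mpr h2]

lemma int1 (c : ℝ) (h1 : 1/2 ≤ c) (h2 : c ≤ 1) :
    (∫ q in (1/2 : ℝ)..1, (if q ≤ c then (0:ℝ) else 1)) = 1 - c := by
  rw [intervalIntegral.integral_of_le (by norm_num)]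
  rw [show (∫ q in Ioc (1/2:ℝ) 1, (if q ≤ c then (0:ℝ) else 1))
      = ∫ q in Ioc (1/2:ℝ) 1, (Ioi c).indicator (fun _ => (1:ℝ)) q from
    setIntegral_congr_fun measurableSet_Ioc (by
      intro q hq
      by_cases h : q ≤ c <;> simp [h, Set.indicator_apply, not_lt.mpr, lt_of_not_ge, mem_Ioi] <;>
        first | exact not_lt.mpr h | exact lt_of_not_ge h)]
  exact indInt c h1 h2

lemma int2 (c1 c2 : ℝ) (h1 : 1/2 ≤ c1) (h12 : c1 ≤ c2) (h2 : c2 ≤ 1) :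
    (∫ q in (1/2 : ℝ)..1, (if q ≤ c1 then (0:ℝ) else if q ≤ c2 then 1 else 2))
      = (1 - c1) + (1 - c2) := by
  rw [intervalIntegral.integral_of_le (by norm_num)]
  rw [show (∫ q in Ioc (1/2:ℝ) 1, (if q ≤ c1 then (0:ℝ) else if q ≤ c2 then 1 else 2))
      = ∫ q in Ioc (1/2:ℝ) 1,
          ((Ioi c1).indicator (fun _ => (1:ℝ)) q + (Ioi c2).indicator (fun _ => (1:ℝ)) q) from
    setIntegral_congr_fun measurableSet_Ioc (by
      intro q hq
      by_cases ha : q ≤ c1 <;> by_cases hb : q ≤ c2 <;>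
        simp [Set.indicator_apply, mem_Ioi, ha, hb, not_lt.mpr, lt_of_not_ge] <;> try linarith
      all_goals
        first
        | (rw [if_neg (by exact not_lt.mpr ha), if_neg (by exact not_lt.mpr hb)]; ring)
        | skip)]
  rw [integral_add (indIntegrable c1) (indIntegrable c2), indInt c1 h1 (le_trans h12 h2),
    indInt c2 (le_trans h1 h12) h2]

lemma ES1 {Ω : Type*} [MeasurableSpace Ω] (Q : Measure Ω) (X : Ω → ℝ) (c : ℝ)
    (hc0 : 1/2 ≤ c) (hc1 : c < 1)
    (hF : ∀ x, (Q {ω | X ω ≤ x}).toReal = if x < 0 then 0 else if x < 1 then c else 1) :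
    ES Q X (1/2) = 2 * (1 - c) := by
  unfold ES
  rw [intervalIntegral.integral_congr (g := fun q => if q ≤ c then (0:ℝ) else 1) (by
    intro q hq
    rw [Set.uIcc_of_le (by norm_num)] at hq
    exact VaR1 Q X c (by linarith) hc1 hF q (by linarith [hq.1]) hq.2)]
  rw [int1 c hc0 hc1.le]
  norm_num

lemma ES2 {Ω : Type*} [MeasurableSpace Ω] (Q : Measure Ω) (X : Ω → ℝ) (c1 c2 : ℝ)
    (hc0 : 1/2 ≤ c1) (hc12 : c1 ≤ c2) (hc1 : c2 < 1)
    (hF : ∀ x, (Q {ω | X ω ≤ x}).toReal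
      = if x < 0 then 0 else if x < 1 then c1 else if x < 2 then c2 else 1) :
    ES Q X (1/2) = 2 * ((1 - c1) + (1 - c2)) := by
  unfold ES
  rw [intervalIntegral.integral_congr (g := fun q => if q ≤ c1 then (0:ℝ) else if q ≤ c2 then 1 else 2) (by
    intro q hq
    rw [Set.uIcc_of_le (by norm_num)] at hq
    exact VaR2 Q X c1 c2 (by linarith) hc12 hc1 hF q (by linarith [hq.1]) hq.2)]
  rw [int2 c1 c2 hc0 hc12 hc1.le]
  norm_num

def mX : Fin 3 → ℝ := fun ω => if ω = 0 then 1 else 0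
def mY : Fin 3 → ℝ := fun ω => if ω = 2 then 0 else 1

lemma cdfX (a b c : ℝ) (ha : 0 ≤ a) (hb : 0 ≤ b) (hc : 0 ≤ c) (habc : a + b + c = 1) :
    ∀ x, ((myQ a b c) {ω | mX ω ≤ x}).toReal
      = if x < 0 then 0 else if x < 1 then b + c else 1 := by
  intro x
  rw [myQ_apply a b c ha hb hc]
  simp only [mem_setOf_eq, mX, show ((1:Fin 3) = 0) = False by simp,
    show ((2:Fin 3) = 0) = False by simp, if_true, if_false, eq_self_iff_true]
  norm_num
  split_ifs <;> linarith

lemma cdfY (a b c : ℝ) (ha : 0 ≤ a) (hb : 0 ≤ b) (hc : 0 ≤ c) (habc : a + b + c = 1) :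
    ∀ x, ((myQ a b c) {ω | mY ω ≤ x}).toReal
      = if x < 0 then 0 else if x < 1 then c else 1 := by
  intro x
  rw [myQ_apply a b c ha hb hc]
  simp only [mem_setOf_eq, mY, show ((0:Fin 3) = 2) = False by simp,
    show ((1:Fin 3) = 2) = False by simp, if_true, if_false, eq_self_iff_true]
  norm_num
  split_ifs <;> linarith

lemma cdfZ (a b c : ℝ) (ha : 0 ≤ a) (hb : 0 ≤ b) (hc : 0 ≤ c) (habc : a + b + c = 1) :
    ∀ x, ((myQ a b c) {ω | mX ω + mY ω ≤ x}).toReal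
      = if x < 0 then 0 else if x < 1 then c else if x < 2 then b + c else 1 := by
  intro x
  rw [myQ_apply a b c ha hb hc]
  simp only [mem_setOf_eq, mX, mY, show ((1:Fin 3) = 0) = False by simp,
    show ((2:Fin 3) = 0) = False by simp, show ((0:Fin 3) = 2) = False by simp,
    show ((1:Fin 3) = 2) = False by simp, if_true, if_false, eq_self_iff_true]
  norm_num
  split_ifs <;> linarith

theorem mes_not_comonotonic_additive :
    ∃ (Ω : Type) (_ : MeasurableSpace Ω) (Q1 Q2 : Measure Ω)
      (_ : IsProbabilityMeasure Q1) (_ : IsProbabilityMeasure Q2)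
      (p : ℝ) (_ : p ∈ Set.Ioo (0 : ℝ) 1) (X Y : Ω → ℝ),
      Measurable X ∧ Measurable Y ∧
      (∃ M, ∀ ω, |X ω| ≤ M) ∧ (∃ M, ∀ ω, |Y ω| ≤ M) ∧
      Comonotonic X Y ∧
      max (ES Q1 (fun ω => X ω + Y ω) p) (ES Q2 (fun ω => X ω + Y ω) p)
        < max (ES Q1 X p) (ES Q2 X p) + max (ES Q1 Y p) (ES Q2 Y p) := by
  refine ⟨Fin 3, inferInstance, myQ (3/10) (1/20) (13/20), myQ (1/5) (1/4) (11/20),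
    myQ_prob _ _ _ (by norm_num) (by norm_num) (by norm_num) (by norm_num),
    myQ_prob _ _ _ (by norm_num) (by norm_num) (by norm_num) (by norm_num),
    1/2, by constructor <;> norm_num, mX, mY,
    fun _ _ => trivial, fun _ _ => trivial,
    ⟨1, by intro ω; fin_cases ω <;> simp [mX] <;> norm_num⟩,
    ⟨1, by intro ω; fin_cases ω <;> simp [mY] <;> norm_num⟩,
    by intro ω ω'; fin_cases ω <;> fin_cases ω' <;> simp [mX, mY, Fin.ext_iff] <;> norm_num,
    ?_⟩
  rw [ES2 _ _ (13/20) (1/20 + 13/20) (by norm_num) (by norm_num) (by norm_num)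
        (cdfZ _ _ _ (by norm_num) (by norm_num) (by norm_num) (by norm_num)),
      ES2 _ _ (11/20) (1/4 + 11/20) (by norm_num) (by norm_num) (by norm_num)
        (cdfZ _ _ _ (by norm_num) (by norm_num) (by norm_num) (by norm_num)),
      ES1 _ _ (1/20 + 13/20) (by norm_num) (by norm_num)
        (cdfX _ _ _ (by norm_num) (by norm_num) (by norm_num) (by norm_num)),
      ES1 _ _ (1/4 + 11/20) (by norm_num) (by norm_num)
        (cdfX _ _ _ (by norm_num) (by norm_num) (by norm_num) (by norm_num)),
      ES1 _ _ (13/20) (by norm_num) (by norm_num)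
        (cdfY _ _ _ (by norm_num) (by norm_num) (by norm_num) (by norm_num)),
      ES1 _ _ (11/20) (by norm_num) (by norm_num)
        (cdfY _ _ _ (by norm_num) (by norm_num) (by norm_num) (by norm_num))]
  norm_num
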